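/- Let H be a Hopf algebra over a commutative ring K with antipode S, C a left H-module coalgebra, and C* its convolution dual, with right H-action on C* given by (xh)(c) = x(hc). Then the rational part Rat(C*) of C* (as a left C*-module under convolution) is a right H-submodule of C*: if y ∈ Rat(C*) with rational parameters {(y_i, c_i)}, then for all h ∈ H, yh ∈ Rat(C*) with rational parameters {(y_i·h₂, S(h₁)·c_i)}. -/

import Mathlib

/-!
Statement 14.  Let `H` be a Hopf algebra over a commutative ring `K`, `C` a left
`H`-module coalgebra, and `C*` its convolution dual, with right `H`-action
`(y·h)(c) = y(h·c)`.  Then the rational part `Rat(C*)` of `C*` (as a left `C*`-module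
under convolution) is a right `H`-submodule of `C*`: if `y` is rational then so is
`y·h` for every `h ∈ H`.
-/

universe u

open TensorProduct

variable {K : Type u} [CommRing K] {C : Type u} [AddCommGroup C] [Module K C]
  [Coalgebra K C]

/-- The convolution product on the dual `C* = Hom_K(C, K)` of a coalgebra. -/
noncomputable def conv (x y : Module.Dual K C) : Module.Dual K C :=
  (TensorProduct.lid K K).toLinearMap ∘ₗ (TensorProduct.map x y) ∘ₗ Coalgebra.comul

/-- `y ∈ C*` is rational (for the left regular `C*`-module structure on `C*`). -/
def IsRationalDual (y : Module.Dual K C) : Prop :=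
  ∃ (n : ℕ) (c : Fin n → C) (y' : Fin n → Module.Dual K C),
    ∀ x : Module.Dual K C, conv x y = ∑ i, x (c i) • y' i

lemma conv_repr (z w : Module.Dual K C) (d : C) {ι : Type*} (s : Finset ι) (p q : ι → C)
    (hd : Coalgebra.comul (R := K) d = ∑ i ∈ s, p i ⊗ₜ[K] q i) :
    conv z w d = ∑ i ∈ s, z (p i) * w (q i) := by
  simp [conv, hd, map_sum, TensorProduct.lid_tmul, smul_eq_mul]

theorem stmt14 {H : Type u} [Ring H] [HopfAlgebra K H]
    -- `C` is a left `H`-module coalgebra, with action `hact`: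
    (hact : H →ₗ[K] C →ₗ[K] C)
    (hone : hact 1 = LinearMap.id)
    (hmul : ∀ g h : H, hact (g * h) = (hact g) ∘ₗ (hact h))
    -- the `H`-action is a coalgebra morphism: `Δ(h·c) = ∑ h₁·c₁ ⊗ h₂·c₂` ...
    (hcomul :
      (Coalgebra.comul (R := K) (A := C)) ∘ₗ (TensorProduct.lift hact) =
        (TensorProduct.map (TensorProduct.lift hact) (TensorProduct.lift hact)) ∘ₗ
          (TensorProduct.tensorTensorTensorComm K H H C C).toLinearMap ∘ₗ
            (TensorProduct.map (Coalgebra.comul (R := K) (A := H))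
              (Coalgebra.comul (R := K) (A := C))))
    -- ... and `ε(h·c) = ε(h)ε(c)`:
    (hcounit : ∀ (h : H) (c : C),
      Coalgebra.counit (R := K) (hact h c) =
        Coalgebra.counit (R := K) (A := H) h * Coalgebra.counit (R := K) (A := C) c) :
    -- `Rat(C*)` is a right `H`-submodule: if `y` is rational, so is `y·h = y ∘ (h·-)`.
    ∀ y : Module.Dual K C, IsRationalDual y → ∀ h : H,
      IsRationalDual (y ∘ₗ (hact h)) := by
  intro y hy h
  obtain ⟨n, c, y', hrat⟩ := hy
  -- antipode
  set S : H →ₗ[K] H := HopfAlgebra.antipode K with hS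
  -- representation of `comul h` indexed by `Fin m`
  set rh : Coalgebra.Repr K h (H × H) := Coalgebra.Repr.arbitrary K h with hrh
  set m : ℕ := rh.index.card with hm
  set e : Fin m ≃ {x // x ∈ rh.index} := rh.index.equivFin.symm with he
  set g : Fin m → H := fun j => rh.left (e j) with hg
  set k : Fin m → H := fun j => rh.right (e j) with hk
  have hrep : Coalgebra.comul (R := K) h = ∑ j : Fin m, g j ⊗ₜ[K] k j := by
    rw [← rh.eq, ← Finset.sum_coe_sort rh.index (fun i => rh.left i ⊗ₜ[K] rh.right i)]
    exact (Equiv.sum_comp e fun i => rh.left i ⊗ₜ[K] rh.right i).symm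
  -- representations of each `comul (k j)` and `comul (g j)`
  set rk : (j : Fin m) → Coalgebra.Repr K (k j) (H × H) := fun j => Coalgebra.Repr.arbitrary K (k j)
    with hrk
  set rg : (j : Fin m) → Coalgebra.Repr K (g j) (H × H) := fun j => Coalgebra.Repr.arbitrary K (g j)
    with hrg
  -- per-element antipode identity
  have ant : ∀ (a : H) (ra : Coalgebra.Repr K a (H × H)),
      ∑ l ∈ ra.index, S (ra.left l) * ra.right l =
        algebraMap K H (Coalgebra.counit (R := K) a) := by
    intro a ra
    have := HopfAlgebra.mul_antipode_rTensor_comul_apply (R := K) (a := a)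
    rw [← ra.eq] at this
    simpa [map_sum] using this
  -- counit identity: `∑ ε(gⱼ) • kⱼ = h`
  have cnt : ∑ j : Fin m, Coalgebra.counit (R := K) (g j) • k j = h := by
    have := Coalgebra.rTensor_counit_comul (R := K) h
    rw [hrep, map_sum] at this
    have := congrArg (TensorProduct.lid K H) this
    simpa [map_sum, TensorProduct.lid_tmul] using this
  -- the map `a ⊗ (b ⊗ d) ↦ (S(a)*b) ⊗ d`
  set Θ : H ⊗[K] (H ⊗[K] H) →ₗ[K] H ⊗[K] H :=
    (LinearMap.rTensor H (LinearMap.mul' K H ∘ₗ LinearMap.rTensor H S)) ∘ₗ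
      (TensorProduct.assoc K H H H).symm.toLinearMap with hΘ
  have Θapp : ∀ a b d : H, Θ (a ⊗ₜ[K] (b ⊗ₜ[K] d)) = (S a * b) ⊗ₜ[K] d := by
    intro a b d
    simp [hΘ, TensorProduct.assoc_symm_tmul, LinearMap.rTensor_tmul, LinearMap.mul'_apply]
  -- coassociativity, elementwise
  have coa : (∑ j : Fin m, ∑ l ∈ (rg j).index,
        (rg j).left l ⊗ₜ[K] ((rg j).right l ⊗ₜ[K] k j)) =
      ∑ j : Fin m, ∑ l ∈ (rk j).index, g j ⊗ₜ[K] ((rk j).left l ⊗ₜ[K] (rk j).right l) := by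
    have := Coalgebra.coassoc_apply (R := K) h
    rw [hrep] at this
    simp only [map_sum] at this
    calc (∑ j : Fin m, ∑ l ∈ (rg j).index,
            (rg j).left l ⊗ₜ[K] ((rg j).right l ⊗ₜ[K] k j))
        = ∑ j : Fin m, (TensorProduct.assoc K H H H)
            (LinearMap.rTensor H (Coalgebra.comul (R := K)) (g j ⊗ₜ[K] k j)) := by
          refine Finset.sum_congr rfl fun j _ => ?_
          rw [LinearMap.rTensor_tmul, ← (rg j).eq, TensorProduct.sum_tmul, map_sum]
          simp [TensorProduct.assoc_tmul]
      _ = ∑ j : Fin m, LinearMap.lTensor H (Coalgebra.comul (R := K)) (g j ⊗ₜ[K] k j) :=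
          this
      _ = ∑ j : Fin m, ∑ l ∈ (rk j).index, g j ⊗ₜ[K] ((rk j).left l ⊗ₜ[K] (rk j).right l) := by
          refine Finset.sum_congr rfl fun j _ => ?_
          rw [LinearMap.lTensor_tmul, ← (rk j).eq, TensorProduct.tmul_sum]
  -- the key identity `∑ (S(gⱼ) * kⱼₗ¹) ⊗ kⱼₗ² = 1 ⊗ h`
  have E : (∑ j : Fin m, ∑ l ∈ (rk j).index,
        (S (g j) * (rk j).left l) ⊗ₜ[K] (rk j).right l) = (1 : H) ⊗ₜ[K] h := by
    calc (∑ j : Fin m, ∑ l ∈ (rk j).index, (S (g j) * (rk j).left l) ⊗ₜ[K] (rk j).right l)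
        = Θ (∑ j : Fin m, ∑ l ∈ (rk j).index,
            g j ⊗ₜ[K] ((rk j).left l ⊗ₜ[K] (rk j).right l)) := by
          rw [map_sum]
          refine Finset.sum_congr rfl fun j _ => ?_
          rw [map_sum]
          exact Finset.sum_congr rfl fun l _ => (Θapp _ _ _).symm
      _ = Θ (∑ j : Fin m, ∑ l ∈ (rg j).index,
            (rg j).left l ⊗ₜ[K] ((rg j).right l ⊗ₜ[K] k j)) := by rw [coa]
      _ = ∑ j : Fin m, ∑ l ∈ (rg j).index, (S ((rg j).left l) * (rg j).right l) ⊗ₜ[K] k j := by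
          rw [map_sum]
          refine Finset.sum_congr rfl fun j _ => ?_
          rw [map_sum]
          exact Finset.sum_congr rfl fun l _ => Θapp _ _ _
      _ = ∑ j : Fin m, algebraMap K H (Coalgebra.counit (R := K) (g j)) ⊗ₜ[K] k j := by
          refine Finset.sum_congr rfl fun j _ => ?_
          rw [← TensorProduct.sum_tmul, ant (g j) (rg j)]
      _ = ∑ j : Fin m, (1 : H) ⊗ₜ[K] (Coalgebra.counit (R := K) (g j) • k j) := by
          refine Finset.sum_congr rfl fun j _ => ?_
          rw [Algebra.algebraMap_eq_smul_one, TensorProduct.smul_tmul]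
      _ = (1 : H) ⊗ₜ[K] h := by rw [← TensorProduct.tmul_sum, cnt]
  -- comultiplication of an acted element
  have hco : ∀ (b : H) (cc : C),
      Coalgebra.comul (R := K) (hact b cc) =
        TensorProduct.map (TensorProduct.lift hact) (TensorProduct.lift hact)
          ((TensorProduct.tensorTensorTensorComm K H H C C)
            (Coalgebra.comul (R := K) b ⊗ₜ[K] Coalgebra.comul (R := K) cc)) := by
    intro b cc
    have := LinearMap.congr_fun hcomul (b ⊗ₜ[K] cc)
    simpa using this
  have hmul' : ∀ (a b : H) (cc : C), hact (a * b) cc = hact a (hact b cc) := by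
    intro a b cc; rw [hmul]; rfl
  -- the witnesses
  refine ⟨m * n,
    fun s => hact (S (g (finProdFinEquiv.symm s).1)) (c (finProdFinEquiv.symm s).2),
    fun s => y' (finProdFinEquiv.symm s).2 ∘ₗ hact (k (finProdFinEquiv.symm s).1), ?_⟩
  intro x
  have reindex : (∑ s : Fin (m * n),
      x (hact (S (g (finProdFinEquiv.symm s).1)) (c (finProdFinEquiv.symm s).2)) •
        (y' (finProdFinEquiv.symm s).2 ∘ₗ hact (k (finProdFinEquiv.symm s).1))) =
      ∑ j : Fin m, ∑ i : Fin n,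
        x (hact (S (g j)) (c i)) • (y' i ∘ₗ hact (k j)) := by
    exact (Equiv.sum_comp finProdFinEquiv.symm
      (fun p : Fin m × Fin n => x (hact (S (g p.1)) (c p.2)) • (y' p.2 ∘ₗ hact (k p.1)))).trans
      (by rw [Fintype.sum_prod_type])
  rw [reindex]
  -- pointwise version of rationality
  have hrat' : ∀ (z : Module.Dual K C) (d : C),
      conv z y d = ∑ i : Fin n, z (c i) * y' i d := by
    intro z d
    have := LinearMap.congr_fun (hrat z) d
    simpa [smul_eq_mul] using this
  -- the core computation, pointwise
  apply LinearMap.ext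
  intro cc
  simp only [LinearMap.coe_sum, Finset.sum_apply, LinearMap.smul_apply,
    LinearMap.comp_apply, smul_eq_mul]
  have step : ∀ j : Fin m,
      (∑ i : Fin n, x (hact (S (g j)) (c i)) * y' i (hact (k j) cc)) =
        (conv (x ∘ₗ hact (S (g j))) y) (hact (k j) cc) := by
    intro j
    rw [hrat' (x ∘ₗ hact (S (g j))) (hact (k j) cc)]
    exact Finset.sum_congr rfl fun i _ => by simp [LinearMap.comp_apply]
  calc conv x (y ∘ₗ hact h) cc
      = ∑ j : Fin m, (conv (x ∘ₗ hact (S (g j))) y) (hact (k j) cc) := ?_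
    _ = ∑ j : Fin m, ∑ i : Fin n, x (hact (S (g j)) (c i)) * y' i (hact (k j) cc) := by
        exact Finset.sum_congr rfl fun j _ => (step j).symm
  set rc : Coalgebra.Repr K cc (C × C) := Coalgebra.Repr.arbitrary K cc with hrc
  -- LHS
  have lhs : conv x (y ∘ₗ hact h) cc =
      ∑ mm ∈ rc.index, x (rc.left mm) * y (hact h (rc.right mm)) := by
    rw [conv_repr x (y ∘ₗ hact h) cc rc.index rc.left rc.right rc.eq.symm]
    rfl
  -- RHS, per j
  have rhs : ∀ j : Fin m,
      (conv (x ∘ₗ hact (S (g j))) y) (hact (k j) cc) =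
        ∑ l ∈ (rk j).index, ∑ mm ∈ rc.index,
          x (hact (S (g j) * (rk j).left l) (rc.left mm)) *
            y (hact ((rk j).right l) (rc.right mm)) := by
    intro j
    have hd : Coalgebra.comul (R := K) (hact (k j) cc) =
        ∑ l ∈ (rk j).index, ∑ mm ∈ rc.index,
          hact ((rk j).left l) (rc.left mm) ⊗ₜ[K] hact ((rk j).right l) (rc.right mm) := by
      rw [hco (k j) cc, ← (rk j).eq, ← rc.eq]
      rw [TensorProduct.sum_tmul, map_sum, map_sum]
      refine Finset.sum_congr rfl fun l _ => ?_
      rw [TensorProduct.tmul_sum, map_sum, map_sum]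
      refine Finset.sum_congr rfl fun mm _ => ?_
      rw [TensorProduct.tensorTensorTensorComm_tmul]
      simp [TensorProduct.map_tmul]
    rw [conv_repr _ y (hact (k j) cc) ((rk j).index ×ˢ rc.index)
      (fun p => hact ((rk j).left p.1) (rc.left p.2))
      (fun p => hact ((rk j).right p.1) (rc.right p.2))
      (by rw [Finset.sum_product]; exact hd)]
    rw [Finset.sum_product]
    refine Finset.sum_congr rfl fun l _ => Finset.sum_congr rfl fun mm _ => ?_
    rw [hmul']
    rfl
  -- assemble, using the key identity `E` paired with a bilinear functional
  have EB : ∀ mm : C × C,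
      (∑ j : Fin m, ∑ l ∈ (rk j).index,
        x (hact (S (g j) * (rk j).left l) (rc.left mm)) *
          y (hact ((rk j).right l) (rc.right mm))) =
      x (rc.left mm) * y (hact h (rc.right mm)) := by
    intro mm
    set B : H ⊗[K] H →ₗ[K] K := TensorProduct.lift (LinearMap.mk₂ K
      (fun u v => x (hact u (rc.left mm)) * y (hact v (rc.right mm)))
      (by intro u u' v
          simp only [map_add, LinearMap.add_apply, smul_eq_mul]; ring)
      (by intro r u v
          simp only [map_smul, LinearMap.smul_apply, smul_eq_mul]; ring)
      (by intro u v v'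
          simp only [map_add, LinearMap.add_apply, smul_eq_mul]; ring)
      (by intro u r v
          simp only [map_smul, LinearMap.smul_apply, smul_eq_mul]; ring)) with hB
    have := congrArg B E
    rw [map_sum] at this
    simp only [map_sum] at this
    simpa [hB, TensorProduct.lift.tmul, hone] using this
  rw [lhs]
  calc (∑ mm ∈ rc.index, x (rc.left mm) * y (hact h (rc.right mm)))
      = ∑ mm ∈ rc.index, ∑ j : Fin m, ∑ l ∈ (rk j).index,
          x (hact (S (g j) * (rk j).left l) (rc.left mm)) *
            y (hact ((rk j).right l) (rc.right mm)) := by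
        exact Finset.sum_congr rfl fun mm _ => (EB mm).symm
    _ = ∑ j : Fin m, ∑ mm ∈ rc.index, ∑ l ∈ (rk j).index,
          x (hact (S (g j) * (rk j).left l) (rc.left mm)) *
            y (hact ((rk j).right l) (rc.right mm)) := Finset.sum_comm
    _ = ∑ j : Fin m, (conv (x ∘ₗ hact (S (g j))) y) (hact (k j) cc) := by
        refine Finset.sum_congr rfl fun j _ => ?_
        rw [rhs j, Finset.sum_comm]
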